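/- Let 0 < p < 1, m ∈ ℕ with m ≥ 1, and N ∈ ℕ with N ≥ m · e^{(log(3^8·e)/(2p))·m − 1}. Then for every adaptive sampling operator Γ : ℓ^2_N → ℝ^m and every map Δ : ℝ^m → ℝ^N, the worst-case ℓ^2 recovery error over the ℓ^p quasi-norm unit ball satisfies sup_{x ∈ B^p_N} ‖x − Δ(Γ(x))‖_2 ≥ (1/2)^{2/p − 1/2}. In particular, this lower bound does not decay as m → ∞. -/

import Mathlib

open Finset

open MeasureTheory Pointwise ENNReal

noncomputable section

lemma rpow_add_le_aux {p : ℝ} (hp0 : 0 < p) (hp1 : p ≤ 1) {x y : ℝ} (hx : 0 ≤ x) (hy : 0 ≤ y) :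
    (x + y) ^ p ≤ x ^ p + y ^ p := by
  have h := NNReal.rpow_add_le_add_rpow x.toNNReal y.toNNReal hp0.le hp1
  have := (NNReal.coe_le_coe).2 h
  simpa [NNReal.coe_rpow, Real.coe_toNNReal _ hx, Real.coe_toNNReal _ hy,
    Real.toNNReal_add hx hy] using this

lemma abs_rpow_add_le {p : ℝ} (hp0 : 0 < p) (hp1 : p ≤ 1) (a b : ℝ) :
    |a + b| ^ p ≤ |a| ^ p + |b| ^ p :=
  (Real.rpow_le_rpow (abs_nonneg _) (abs_add_le a b) hp0.le).trans
    (rpow_add_le_aux hp0 hp1 (abs_nonneg a) (abs_nonneg b))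

lemma sum_abs_rpow_add_le {ι : Type*} (s : Finset ι) {p : ℝ} (hp0 : 0 < p) (hp1 : p ≤ 1)
    (f g : ι → ℝ) :
    ∑ i ∈ s, |f i + g i| ^ p ≤ ∑ i ∈ s, |f i| ^ p + ∑ i ∈ s, |g i| ^ p := by
  rw [← Finset.sum_add_distrib]
  exact Finset.sum_le_sum fun i _ => abs_rpow_add_le hp0 hp1 _ _

lemma sum_abs_rpow_single {N : ℕ} {p : ℝ} (hp0 : 0 < p) (i : Fin N) :
    ∑ l, |EuclideanSpace.single i (1:ℝ) l| ^ p = 1 := by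
  classical
  have : ∀ l : Fin N, |EuclideanSpace.single i (1:ℝ) l| ^ p = if l = i then 1 else 0 := by
    intro l
    rw [EuclideanSpace.single_apply]
    by_cases h : l = i <;> simp [h, Real.zero_rpow hp0.ne', Real.one_rpow]
  simp only [this]
  simp

lemma continuous_lp_sum {N : ℕ} {p : ℝ} (hp0 : 0 < p) :
    Continuous fun x : EuclideanSpace ℝ (Fin N) => ∑ l, |x l| ^ p := by
  apply continuous_finset_sum
  intro l _
  have h1 : Continuous fun x : EuclideanSpace ℝ (Fin N) => |x l| :=
    ((EuclideanSpace.proj l).continuous).abs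
  rw [continuous_iff_continuousAt]
  intro x
  exact (Real.continuousAt_rpow_const _ _ (Or.inr hp0.le)).comp h1.continuousAt

lemma norm_le_lp_aux {N : ℕ} {p : ℝ} (hp0 : 0 < p) (hp2 : p ≤ 2) (x : EuclideanSpace ℝ (Fin N)) :
    ‖x‖ ≤ (∑ i, |x i| ^ p) ^ (1 / p) := by
  rcases eq_or_ne x 0 with rfl | hx
  · simp only [norm_zero]
    positivity
  set S := ∑ i, |x i| ^ p with hS
  have hS0 : 0 ≤ S := Finset.sum_nonneg fun i _ => Real.rpow_nonneg (abs_nonneg _) _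
  have hSpos : 0 < S := by
    obtain ⟨i, hi⟩ : ∃ i, x i ≠ 0 := by
      by_contra h
      push_neg at h
      exact hx (PiLp.ext h)
    have : 0 < |x i| ^ p := Real.rpow_pos_of_pos (abs_pos.2 hi) _
    exact this.trans_le (Finset.single_le_sum (fun j _ => Real.rpow_nonneg (abs_nonneg _) _)
      (Finset.mem_univ i))
  have hM0 : 0 ≤ S ^ (1 / p) := Real.rpow_nonneg hS0 _
  have hcoord : ∀ i, |x i| ≤ S ^ (1 / p) := by
    intro i
    have h1 : |x i| ^ p ≤ S := Finset.single_le_sum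
      (fun j _ => Real.rpow_nonneg (abs_nonneg _) _) (Finset.mem_univ i)
    calc |x i| = (|x i| ^ p) ^ (1 / p) := by
          rw [one_div, Real.rpow_rpow_inv (abs_nonneg _) hp0.ne']
      _ ≤ S ^ (1 / p) := Real.rpow_le_rpow (Real.rpow_nonneg (abs_nonneg _) _) h1 (by positivity)
  have key : ∑ i, ‖x i‖ ^ (2:ℕ) ≤ (S ^ (1/p)) ^ (2:ℕ) := by
    have hterm : ∀ i : Fin N, ‖x i‖ ^ (2:ℕ) ≤ |x i| ^ p * (S ^ (1/p)) ^ (2 - p) := by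
      intro i
      rcases eq_or_ne (x i) 0 with h0 | h0
      · simp [h0, Real.zero_rpow hp0.ne']
      · have hpos : 0 < |x i| := abs_pos.2 h0
        have : ‖x i‖ ^ (2:ℕ) = |x i| ^ p * |x i| ^ (2 - p) := by
          rw [Real.norm_eq_abs, ← Real.rpow_natCast |x i| 2, ← Real.rpow_add hpos]
          norm_num
        rw [this]
        exact mul_le_mul_of_nonneg_left
          (Real.rpow_le_rpow (abs_nonneg _) (hcoord i) (by linarith))
          (Real.rpow_nonneg (abs_nonneg _) _)
    calc ∑ i, ‖x i‖ ^ (2:ℕ) ≤ ∑ i, |x i| ^ p * (S ^ (1/p)) ^ (2 - p) :=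
          Finset.sum_le_sum fun i _ => hterm i
      _ = S * (S ^ (1/p)) ^ (2 - p) := by rw [← Finset.sum_mul]
      _ = (S ^ (1/p)) ^ (2:ℕ) := by
          rw [← Real.rpow_natCast (S ^ (1/p)) 2, ← Real.rpow_mul hS0, ← Real.rpow_mul hS0]
          nth_rewrite 1 [← Real.rpow_one S]
          rw [← Real.rpow_add hSpos]
          congr 1
          push_cast
          field_simp
          ring
  rw [EuclideanSpace.norm_eq]
  calc Real.sqrt (∑ i, ‖x i‖ ^ 2) ≤ Real.sqrt ((S ^ (1/p)) ^ (2:ℕ)) := Real.sqrt_le_sqrt key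
    _ = S ^ (1/p) := by rw [Real.sqrt_sq hM0]

set_option maxHeartbeats 1000000 in
lemma exists_good_kernel_vector {N m : ℕ} {p : ℝ} (hp0 : 0 < p) (hp1 : p < 1)
    (hN : ((16:ℝ) ^ ((m : ℝ) / p)) < N)
    (V : Submodule ℝ (EuclideanSpace ℝ (Fin N)))
    (hV : Module.finrank ℝ (EuclideanSpace ℝ (Fin N) ⧸ V) ≤ m) :
    ∃ i j : Fin N, i ≠ j ∧ ∃ x : EuclideanSpace ℝ (Fin N),
      (x - (EuclideanSpace.single i (1:ℝ) - EuclideanSpace.single j (1:ℝ))) ∈ V ∧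
      ∑ l, |x l| ^ p < 1/4 := by
  classical
  by_contra hcon
  push_neg at hcon
  set E := EuclideanSpace ℝ (Fin N)
  haveI : IsClosed (V : Set E) := Submodule.closed_of_finiteDimensional V
  set Q := E ⧸ V
  letI : MeasurableSpace Q := borel Q
  haveI : BorelSpace Q := ⟨rfl⟩
  set K₀ : TopologicalSpace.PositiveCompacts Q := Classical.arbitrary _
  set μ : Measure Q := Measure.addHaarMeasure K₀ with hμ
  haveI : μ.IsAddHaarMeasure := Measure.isAddHaarMeasure_addHaarMeasure K₀
  set π : E →ₗ[ℝ] Q := V.mkQ with hπdef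
  have hπcont : Continuous π := continuous_quot_mk
  have hπopen : IsOpenMap π := V.isOpenMap_mkQ
  set e : Fin N → E := fun i => EuclideanSpace.single i (1:ℝ) with he
  set U : ℝ → Set Q := fun s => π '' {x : E | ∑ l, |x l| ^ p < s} with hU
  have hUopen : ∀ s, IsOpen (U s) :=
    fun s => hπopen _ (isOpen_lt (continuous_lp_sum hp0) continuous_const)
  -- scaling
  have hscale : ∀ r : ℝ, 0 < r → ∀ s : ℝ, r • U s = U (r ^ p * s) := by
    intro r hr s
    have h1 : r • ({x : E | ∑ l, |x l| ^ p < s}) = {x : E | ∑ l, |x l| ^ p < r ^ p * s} := by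
      ext x
      rw [Set.mem_smul_set_iff_inv_smul_mem₀ (ne_of_gt hr)]
      simp only [Set.mem_setOf_eq]
      have hterm : ∀ l, |(r⁻¹ • x) l| ^ p = (r ^ p)⁻¹ * |x l| ^ p := by
        intro l
        have : (r⁻¹ • x) l = r⁻¹ * x l := rfl
        rw [this, abs_mul, Real.mul_rpow (abs_nonneg _) (abs_nonneg _),
          abs_of_pos (inv_pos.2 hr), Real.inv_rpow hr.le]
      rw [Finset.sum_congr rfl fun l _ => hterm l, ← Finset.mul_sum]
      rw [inv_mul_lt_iff₀ (Real.rpow_pos_of_pos hr _)]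
    calc r • U s = π '' (r • {x : E | ∑ l, |x l| ^ p < s}) := by
          rw [hU]
          exact (image_smul_set π r _).symm
      _ = U (r ^ p * s) := by rw [h1]

  -- the balls
  set B : Fin N → Set Q := fun i => π (e i) +ᵥ U (1/8) with hB
  have hBopen : ∀ i, IsOpen (B i) := fun i => (hUopen _).vadd _
  -- disjointness
  have hdisj : Set.PairwiseDisjoint (Finset.univ : Finset (Fin N)) B := by
    intro i _ j _ hij
    rw [Function.onFun, Set.disjoint_left]
    rintro y hyi hyj
    obtain ⟨u, hu, huy⟩ := Set.mem_vadd_set.mp hyi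
    obtain ⟨v, hv, hvy⟩ := Set.mem_vadd_set.mp hyj
    obtain ⟨a, ha, hau⟩ := hu
    obtain ⟨b, hb, hbv⟩ := hv
    have hπeq : π ((e i + a) - (e j + b)) = 0 := by
      have h1a : π (e i) + π a = y := by rw [hau]; simpa [vadd_eq_add] using huy
      have h1b : π (e j) + π b = y := by rw [hbv]; simpa [vadd_eq_add] using hvy
      rw [map_sub, map_add, map_add, h1a, h1b, sub_self]
    have hker : (e i + a) - (e j + b) ∈ V := by
      rw [← V.ker_mkQ, LinearMap.mem_ker]
      exact hπeq
    have hxV : (b - a) - (e i - e j) ∈ V := by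
      have heq : (b - a) - (e i - e j) = -((e i + a) - (e j + b)) := by abel
      rw [heq]
      exact V.neg_mem hker
    have hxs : ∑ l, |(b - a) l| ^ p < 1/4 := by
      have h2 : ∑ l, |(b - a) l| ^ p ≤ ∑ l, |b l| ^ p + ∑ l, |a l| ^ p := by
        have h3 := sum_abs_rpow_add_le Finset.univ hp0 hp1.le
          (fun l => b l) (fun l => -(a l))
        simp only [abs_neg] at h3
        have h4 : ∀ l, (b - a) l = b l + -(a l) := fun l => rfl
        calc ∑ l, |(b - a) l| ^ p = ∑ l, |b l + -(a l)| ^ p := by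
              exact Finset.sum_congr rfl fun l _ => by rw [h4 l]
          _ ≤ _ := h3
      have ha8 : ∑ l, |a l| ^ p < 1/8 := ha
      have hb8 : ∑ l, |b l| ^ p < 1/8 := hb
      linarith
    exact absurd hxs (not_lt.mpr (hcon i j hij (b - a) hxV))
  -- union is contained in U 2
  have hUnion : (⋃ i ∈ (Finset.univ : Finset (Fin N)), B i) ⊆ U 2 := by
    intro y hy
    simp only [Finset.mem_univ, Set.iUnion_true, Set.mem_iUnion] at hy
    obtain ⟨i, hyB⟩ := hy
    obtain ⟨u, hu, huy⟩ := Set.mem_vadd_set.mp hyB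
    obtain ⟨a, ha, hau⟩ := hu
    refine ⟨e i + a, ?_, by rw [map_add, hau]; simpa [vadd_eq_add] using huy⟩
    have h1 : ∑ l, |(e i + a) l| ^ p ≤ 1 + ∑ l, |a l| ^ p := by
      have h3 := sum_abs_rpow_add_le Finset.univ hp0 hp1.le (fun l => e i l) (fun l => a l)
      have h4 : ∑ l, |e i l| ^ p = 1 := sum_abs_rpow_single hp0 i
      calc ∑ l, |(e i + a) l| ^ p = ∑ l, |e i l + a l| ^ p := rfl
        _ ≤ ∑ l, |e i l| ^ p + ∑ l, |a l| ^ p := h3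
        _ = 1 + ∑ l, |a l| ^ p := by rw [h4]
    have ha8 : ∑ l, |a l| ^ p < 1/8 := ha
    show ∑ l, |(e i + a) l| ^ p < 2
    linarith
  -- measure counting
  have hUsubset : U (1/8) ⊆ U 2 := Set.image_mono (fun x hx => by
    simp only [Set.mem_setOf_eq] at hx ⊢; linarith)
  have hKcomp : IsCompact {x : E | ∑ l, |x l| ^ p ≤ 2} := by
    have hclosed : IsClosed {x : E | ∑ l, |x l| ^ p ≤ 2} :=
      isClosed_le (continuous_lp_sum hp0) continuous_const
    have hbdd : Bornology.IsBounded {x : E | ∑ l, |x l| ^ p ≤ 2} := by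
      apply Bornology.IsBounded.subset (Metric.isBounded_closedBall
        (x := (0:E)) (r := (2:ℝ) ^ (1/p)))
      intro x hx
      simp only [Set.mem_setOf_eq] at hx
      rw [Metric.mem_closedBall, dist_zero_right]
      calc ‖x‖ ≤ (∑ l, |x l| ^ p) ^ (1/p) := norm_le_lp_aux hp0 (by linarith) x
        _ ≤ (2:ℝ) ^ (1/p) := Real.rpow_le_rpow
            (Finset.sum_nonneg fun l _ => Real.rpow_nonneg (abs_nonneg _) _) hx (by positivity)
    exact Metric.isCompact_of_isClosed_isBounded hclosed hbdd
  have hU2fin : μ (U 2) < ⊤ := by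
    refine lt_of_le_of_lt (measure_mono ?_) (hKcomp.image hπcont).measure_lt_top
    rintro q ⟨x, hx, rfl⟩
    have hx2 : ∑ l, |x l| ^ p < 2 := hx
    exact ⟨x, show ∑ l, |x l| ^ p ≤ 2 from le_of_lt hx2, rfl⟩
  have hUpos : 0 < μ (U (1/8)) := by
    apply (hUopen (1/8)).measure_pos μ
    refine ⟨π 0, Set.mem_image_of_mem _ ?_⟩
    have : ∀ l : Fin N, |(0:E) l| ^ p = 0 := by
      intro l
      have : (0:E) l = 0 := rfl
      rw [this, abs_zero, Real.zero_rpow hp0.ne']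
    simp only [Set.mem_setOf_eq, this]
    norm_num
  have hUfin : μ (U (1/8)) < ⊤ := lt_of_le_of_lt (measure_mono hUsubset) hU2fin
  set D : ℕ := Module.finrank ℝ Q with hD
  have hU2eq : μ (U 2) = ENNReal.ofReal (((16:ℝ) ^ (1/p)) ^ D) * μ (U (1/8)) := by
    have hr : (0:ℝ) < 16 ^ (1/p) := Real.rpow_pos_of_pos (by norm_num) _
    have hsc : (16:ℝ) ^ (1/p) • U (1/8) = U 2 := by
      rw [hscale _ hr]
      congr 1
      rw [one_div, Real.rpow_inv_rpow (by norm_num) hp0.ne']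
      norm_num
    rw [← hsc, Measure.addHaar_smul_of_nonneg μ hr.le]
  have hcount : (N : ℝ≥0∞) * μ (U (1/8)) ≤ ENNReal.ofReal (((16:ℝ) ^ (1/p)) ^ D) * μ (U (1/8)) := by
    have h1 : μ (⋃ i ∈ (Finset.univ : Finset (Fin N)), B i) = ∑ i ∈ Finset.univ, μ (B i) :=
      measure_biUnion_finset hdisj (fun i _ => (hBopen i).measurableSet)
    have h2 : ∀ i, μ (B i) = μ (U (1/8)) := fun i =>
      show μ (π (e i) +ᵥ U (1/8)) = μ (U (1/8)) from measure_vadd _ _ _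
    calc (N : ℝ≥0∞) * μ (U (1/8)) = ∑ _i ∈ (Finset.univ : Finset (Fin N)), μ (U (1/8)) := by
          rw [Finset.sum_const, Finset.card_univ, Fintype.card_fin, nsmul_eq_mul]
      _ = ∑ i ∈ Finset.univ, μ (B i) := Finset.sum_congr rfl fun i _ => (h2 i).symm
      _ = μ (⋃ i ∈ (Finset.univ : Finset (Fin N)), B i) := h1.symm
      _ ≤ μ (U 2) := measure_mono hUnion
      _ = _ := hU2eq
  have hNle : (N : ℝ≥0∞) ≤ ENNReal.ofReal (((16:ℝ) ^ (1/p)) ^ D) :=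
    (ENNReal.mul_le_mul_iff_left hUpos.ne' hUfin.ne).mp hcount
  have hNreal : (N : ℝ) ≤ ((16:ℝ) ^ (1/p)) ^ D := by
    have := hNle
    rw [← ENNReal.ofReal_natCast] at this
    exact (ENNReal.ofReal_le_ofReal_iff (by positivity)).mp this
  have hfinal : ((16:ℝ) ^ (1/p)) ^ D ≤ (16:ℝ) ^ ((m:ℝ)/p) := by
    have h1 : (1:ℝ) ≤ (16:ℝ) ^ (1/p) :=
      Real.one_le_rpow (by norm_num) (by positivity)
    calc ((16:ℝ) ^ (1/p)) ^ D ≤ ((16:ℝ) ^ (1/p)) ^ m := pow_le_pow_right₀ h1 hV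
      _ = (16:ℝ) ^ ((m:ℝ)/p) := by
          rw [← Real.rpow_natCast ((16:ℝ) ^ (1/p)) m, ← Real.rpow_mul (by norm_num)]
          congr 1
          ring
  linarith


lemma finrank_quotient_ker_pi_le {N m : ℕ} (g : Fin m → (EuclideanSpace ℝ (Fin N) →ₗ[ℝ] ℝ)) :
    Module.finrank ℝ (EuclideanSpace ℝ (Fin N) ⧸ LinearMap.ker (LinearMap.pi g)) ≤ m := by
  rw [(LinearMap.quotKerEquivRange (LinearMap.pi g)).finrank_eq]
  have h2 := Submodule.finrank_le (LinearMap.range (LinearMap.pi g))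
  simpa [Module.finrank_fintype_fun_eq_card] using h2

lemma sum_abs_rpow_pair {N : ℕ} {p : ℝ} (hp0 : 0 < p) {i j : Fin N} (hij : i ≠ j) :
    ∑ l, |(EuclideanSpace.single i (1:ℝ) - EuclideanSpace.single j (1:ℝ)) l| ^ p = 2 := by
  classical
  have hterm : ∀ l : Fin N,
      |(EuclideanSpace.single i (1:ℝ) - EuclideanSpace.single j (1:ℝ)) l| ^ p
        = (if l = i then 1 else 0) + (if l = j then 1 else 0) := by
    intro l
    have happ : (EuclideanSpace.single i (1:ℝ) - EuclideanSpace.single j (1:ℝ)) l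
        = (if l = i then (1:ℝ) else 0) - (if l = j then (1:ℝ) else 0) := by
      have : (EuclideanSpace.single i (1:ℝ) - EuclideanSpace.single j (1:ℝ)) l
          = EuclideanSpace.single i (1:ℝ) l - EuclideanSpace.single j (1:ℝ) l := rfl
      rw [this, EuclideanSpace.single_apply, EuclideanSpace.single_apply]
    rw [happ]
    by_cases h1 : l = i
    · have h2 : l ≠ j := h1 ▸ hij
      subst h1
      simp only [if_pos rfl, if_neg h2, if_neg hij, sub_zero, abs_one, Real.one_rpow]
      norm_num
    · by_cases h2 : l = j
      · subst h2
        simp only [if_neg h1, if_pos rfl, if_neg (Ne.symm hij), zero_sub, abs_neg, abs_one,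
          Real.one_rpow]
        norm_num
      · simp [h1, h2, Real.zero_rpow hp0.ne']
  rw [Finset.sum_congr rfl fun l _ => hterm l, Finset.sum_add_distrib]
  simp
  norm_num

lemma norm_single_pair {N : ℕ} {i j : Fin N} (hij : i ≠ j) :
    ‖(EuclideanSpace.single i (1:ℝ) - EuclideanSpace.single j (1:ℝ))‖ = Real.sqrt 2 := by
  classical
  rw [EuclideanSpace.norm_eq]
  congr 1
  have hterm : ∀ l : Fin N,
      ‖(EuclideanSpace.single i (1:ℝ) - EuclideanSpace.single j (1:ℝ)) l‖ ^ 2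
        = (if l = i then 1 else 0) + (if l = j then 1 else 0) := by
    intro l
    have : (EuclideanSpace.single i (1:ℝ) - EuclideanSpace.single j (1:ℝ)) l
        = (if l = i then (1:ℝ) else 0) - (if l = j then (1:ℝ) else 0) := by
      have h0 : (EuclideanSpace.single i (1:ℝ) - EuclideanSpace.single j (1:ℝ)) l
          = EuclideanSpace.single i (1:ℝ) l - EuclideanSpace.single j (1:ℝ) l := rfl
      rw [h0, EuclideanSpace.single_apply, EuclideanSpace.single_apply]
    rw [this]
    by_cases h1 : l = i
    · have h2 : l ≠ j := h1 ▸ hij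
      subst h1
      simp only [Real.norm_eq_abs, if_pos rfl, if_neg h2, if_neg hij, sub_zero, abs_one]
      norm_num
    · by_cases h2 : l = j
      · subst h2
        simp only [Real.norm_eq_abs, if_neg h1, if_pos rfl, if_neg (Ne.symm hij), zero_sub]
        norm_num
      · simp [h1, h2]
  rw [Finset.sum_congr rfl fun l _ => hterm l, Finset.sum_add_distrib]
  simp
  norm_num

lemma numeric_hN {m N : ℕ} (hm : 1 ≤ m) {p : ℝ} (hp0 : 0 < p) (hp1 : p < 1)
    (hN : (m : ℝ) * Real.exp ((Real.log (3 ^ 8 * Real.exp 1) / (2 * p)) * m - 1) ≤ N) :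
    (16:ℝ) ^ ((m:ℝ)/p) < N := by
  have hm1 : (1:ℝ) ≤ (m:ℝ) := by exact_mod_cast hm
  have hq1 : 1 < (m:ℝ)/p := by
    rw [lt_div_iff₀ hp0]
    nlinarith
  have hq0 : 0 < (m:ℝ)/p := lt_trans one_pos hq1
  have hlog32 : 1/8 < Real.log 3 - Real.log 2 := by
    have h1 : Real.log (3/2) = Real.log 3 - Real.log 2 :=
      Real.log_div (by norm_num) (by norm_num)
    rw [← h1, Real.lt_log_iff_exp_lt (by norm_num)]
    have h2 := Real.add_one_lt_exp (x := (-(1/8):ℝ)) (by norm_num)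
    rw [Real.exp_neg] at h2
    have h3 := Real.exp_pos (1/8:ℝ)
    have h4 : (7:ℝ)/8 < (Real.exp (1/8))⁻¹ := by linarith
    have h5 : Real.exp (1/8) * (7/8) < 1 := by
      have := mul_lt_mul_of_pos_left h4 h3
      rwa [mul_inv_cancel₀ h3.ne'] at this
    nlinarith
  have hC : Real.log (3 ^ 8 * Real.exp 1) = 8 * Real.log 3 + 1 := by
    rw [Real.log_mul (by positivity) (Real.exp_pos 1).ne', Real.log_pow, Real.log_exp]
    norm_num
  have hlog16 : Real.log 16 = 4 * Real.log 2 := by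
    rw [show (16:ℝ) = 2^4 by norm_num, Real.log_pow]
    norm_num
  have hK : (1:ℝ) < (8 * Real.log 3 + 1)/2 - 4 * Real.log 2 := by nlinarith
  have hkey : ((m:ℝ)/p) * Real.log 16 < (Real.log (3 ^ 8 * Real.exp 1) / (2 * p)) * m - 1 := by
    rw [hC, hlog16]
    have heq : (8 * Real.log 3 + 1) / (2 * p) * m = ((m:ℝ)/p) * ((8 * Real.log 3 + 1)/2) := by
      field_simp
    rw [heq]
    have h6 := mul_lt_mul_of_pos_left hK hq0
    rw [mul_one] at h6
    nlinarith
  calc (16:ℝ)^((m:ℝ)/p) = Real.exp (((m:ℝ)/p) * Real.log 16) := by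
        rw [Real.rpow_def_of_pos (by norm_num), mul_comm]
    _ < Real.exp ((Real.log (3 ^ 8 * Real.exp 1) / (2 * p)) * m - 1) := Real.exp_lt_exp.mpr hkey
    _ ≤ (m : ℝ) * Real.exp ((Real.log (3 ^ 8 * Real.exp 1) / (2 * p)) * m - 1) :=
        le_mul_of_one_le_left (Real.exp_pos _).le hm1
    _ ≤ N := hN

/-- `Γ : X → ℝ^m` is an adaptive sampling operator: there are maps
`L i : X × ℝ^i → ℝ`, bounded and linear in the first argument, such that the `i`-th
sample `Γ(x) i` equals `L i` applied to `x` and the previous samples. -/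
def IsAdaptive {X : Type*} [NormedAddCommGroup X] [NormedSpace ℝ X] {m : ℕ}
    (Γ : X → (Fin m → ℝ)) : Prop :=
  ∃ L : (i : Fin m) → X → (Fin i.val → ℝ) → ℝ,
    (∀ i v, IsBoundedLinearMap ℝ fun x => L i x v) ∧
    ∀ x i, Γ x i = L i x fun j => Γ x ⟨j.val, j.isLt.trans i.isLt⟩

set_option maxHeartbeats 1000000 in
/-- let `0 < p < 1`, `m ≥ 1` and `N ≥ m e^{(log(3^8 e)/(2p)) m - 1}`.
Then for every adaptive sampling operator `Γ : ℓ²_N → ℝ^m` and every reconstruction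
map `Δ : ℝ^m → ℝ^N`, the worst-case `ℓ²` recovery error over the `ℓ^p` quasi-norm
unit ball is at least `(1/2)^{2/p - 1/2}`; indeed there is an `x` in the ball whose
recovery error is at least that value (a bound that does not decay as `m → ∞`). -/
theorem statement6 {N m : ℕ} (hm : 1 ≤ m) (p : ℝ) (hp0 : 0 < p) (hp1 : p < 1)
    (hN : (m : ℝ) * Real.exp ((Real.log (3 ^ 8 * Real.exp 1) / (2 * p)) * m - 1) ≤ N)
    (Γ : EuclideanSpace ℝ (Fin N) → (Fin m → ℝ)) (hΓ : IsAdaptive Γ)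
    (Δ : (Fin m → ℝ) → EuclideanSpace ℝ (Fin N)) :
    ∃ x : EuclideanSpace ℝ (Fin N), (∑ i, |x i| ^ p) ^ (1 / p) ≤ 1 ∧
      (1 / 2 : ℝ) ^ (2 / p - 1 / 2 : ℝ) ≤ ‖x - Δ (Γ x)‖ := by
  classical
  obtain ⟨L, hL1, hL2⟩ := hΓ
  set g : Fin m → (EuclideanSpace ℝ (Fin N) →ₗ[ℝ] ℝ) := fun i =>
    IsLinearMap.mk' (fun x => L i x (fun _ => 0)) (hL1 i (fun _ => 0)).toIsLinearMap with hg
  set V : Submodule ℝ (EuclideanSpace ℝ (Fin N)) := LinearMap.ker (LinearMap.pi g) with hVdef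
  have hVmem : ∀ x : EuclideanSpace ℝ (Fin N), x ∈ V → ∀ i, L i x (fun _ => 0) = 0 := by
    intro x hx i
    rw [hVdef, LinearMap.mem_ker] at hx
    have := congrFun hx i
    simpa [LinearMap.pi_apply, hg] using this
  -- Γ vanishes on V
  have hΓ0 : ∀ x : EuclideanSpace ℝ (Fin N), x ∈ V → Γ x = fun _ => 0 := by
    intro x hx
    funext i
    have key : ∀ n (hn : n < m), Γ x ⟨n, hn⟩ = 0 := by
      intro n
      induction n using Nat.strong_induction_on with
      | _ n IH =>
        intro hn
        rw [hL2 x ⟨n, hn⟩]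
        have hz : (fun j : Fin n => Γ x ⟨j.val, j.isLt.trans hn⟩) = fun _ => (0:ℝ) :=
          funext fun j => IH j.val j.isLt _
        rw [show (fun j : Fin (⟨n, hn⟩ : Fin m).val => Γ x ⟨j.val, j.isLt.trans hn⟩)
          = fun _ => (0:ℝ) from hz]
        exact hVmem x hx ⟨n, hn⟩
    rw [← Fin.eta i i.isLt]
    exact key i.val i.isLt
  -- apply the counting lemma
  have hrank := finrank_quotient_ker_pi_le g
  obtain ⟨i, j, hij, x, hxV, hxs⟩ :=
    exists_good_kernel_vector hp0 hp1 (numeric_hN hm hp0 hp1 hN) V (by rw [hVdef]; exact hrank)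
  set w : EuclideanSpace ℝ (Fin N) :=
    EuclideanSpace.single i (1:ℝ) - EuclideanSpace.single j (1:ℝ) with hw
  set u : EuclideanSpace ℝ (Fin N) := x - w with hu
  have huV : u ∈ V := hxV
  have hsumw : ∑ l, |w l| ^ p = 2 := sum_abs_rpow_pair hp0 hij
  have hnormw : ‖w‖ = Real.sqrt 2 := norm_single_pair hij
  -- lp bound on u
  have hsumu : ∑ l, |u l| ^ p ≤ 9/4 := by
    have h1 := sum_abs_rpow_add_le Finset.univ hp0 hp1.le (fun l => x l) (fun l => -(w l))
    simp only [abs_neg] at h1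
    have h2 : ∀ l, u l = x l + -(w l) := fun l => rfl
    calc ∑ l, |u l| ^ p = ∑ l, |x l + -(w l)| ^ p :=
          Finset.sum_congr rfl fun l _ => by rw [h2 l]
      _ ≤ ∑ l, |x l| ^ p + ∑ l, |w l| ^ p := h1
      _ ≤ 9/4 := by rw [hsumw]; linarith
  -- l2 lower bound on u
  have hsqrt2 : (1:ℝ) ≤ Real.sqrt 2 := by
    rw [show (1:ℝ) = Real.sqrt 1 from (Real.sqrt_one).symm]
    exact Real.sqrt_le_sqrt (by norm_num)
  have hnormx : ‖x‖ ≤ 1/4 := by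
    have h1 : ‖x‖ ≤ (∑ l, |x l| ^ p) ^ (1/p) := norm_le_lp_aux hp0 (by linarith) x
    have h2 : (∑ l, |x l| ^ p) ^ (1/p) ≤ ((1:ℝ)/4) ^ (1/p) :=
      Real.rpow_le_rpow (Finset.sum_nonneg fun l _ => Real.rpow_nonneg (abs_nonneg _) _)
        hxs.le (by positivity)
    have h3 : ((1:ℝ)/4) ^ (1/p) ≤ ((1:ℝ)/4) ^ (1:ℝ) := by
      apply Real.rpow_le_rpow_of_exponent_ge (by norm_num) (by norm_num)
      rw [le_div_iff₀ hp0]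
      linarith
    rw [Real.rpow_one] at h3
    linarith
  have hnormu : Real.sqrt 2 - 1/4 ≤ ‖u‖ := by
    have h1 : ‖w‖ - ‖x‖ ≤ ‖x - w‖ := by
      have := abs_le.mp (abs_norm_sub_norm_le x w)
      linarith [this.1]
    rw [hu]
    rw [hnormw] at h1
    linarith
  have hupos : 0 < ‖u‖ := by nlinarith
  -- normalize
  set T := ∑ l, |u l| ^ p with hT
  have hTpos : 0 < T := by
    obtain ⟨l, hl⟩ : ∃ l, u l ≠ 0 := by
      by_contra hcon
      push_neg at hcon
      have h0 : u = 0 := PiLp.ext hcon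
      rw [h0, norm_zero] at hupos
      exact lt_irrefl 0 hupos
    have h1 : 0 < |u l| ^ p := Real.rpow_pos_of_pos (abs_pos.2 hl) _
    exact lt_of_lt_of_le h1 (Finset.single_le_sum
      (fun l' _ => Real.rpow_nonneg (abs_nonneg _) _) (Finset.mem_univ l))
  set σ := T ^ (1/p : ℝ) with hσ
  have hσpos : 0 < σ := Real.rpow_pos_of_pos hTpos _
  have hσp : σ ^ p = T := by
    rw [hσ, one_div, Real.rpow_inv_rpow hTpos.le hp0.ne']
  set z : EuclideanSpace ℝ (Fin N) := σ⁻¹ • u with hz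
  have hzV : z ∈ V := V.smul_mem _ huV
  have hzsum : ∑ l, |z l| ^ p = 1 := by
    have h1 : ∀ l, |z l| ^ p = (σ ^ p)⁻¹ * |u l| ^ p := by
      intro l
      have h2 : z l = σ⁻¹ * u l := rfl
      rw [h2, abs_mul, Real.mul_rpow (abs_nonneg _) (abs_nonneg _),
        abs_of_pos (inv_pos.2 hσpos), Real.inv_rpow hσpos.le]
    rw [Finset.sum_congr rfl fun l _ => h1 l, ← Finset.mul_sum, hσp, ← hT,
      inv_mul_cancel₀ hTpos.ne']
  have hzlp : (∑ l, |z l| ^ p) ^ (1/p : ℝ) ≤ 1 := by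
    rw [hzsum, Real.one_rpow]
  have hznorm : (1 / 2 : ℝ) ^ (2 / p - 1 / 2 : ℝ) ≤ ‖z‖ := by
    have htarget : (1 / 2 : ℝ) ^ (2 / p - 1 / 2 : ℝ)
        = Real.sqrt 2 * ((1:ℝ)/4) ^ (1/p : ℝ) := by
      rw [Real.rpow_sub (by norm_num)]
      have h1 : (1/2 : ℝ) ^ (2/p : ℝ) = ((1:ℝ)/4) ^ (1/p : ℝ) := by
        rw [show (2/p : ℝ) = 2 * (1/p) by ring, Real.rpow_mul (by norm_num),
          show ((1:ℝ)/2) ^ (2:ℝ) = 1/4 by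
            rw [show (2:ℝ) = ((2:ℕ):ℝ) by norm_num, Real.rpow_natCast]; norm_num]
      have h2 : (1/2 : ℝ) ^ (1/2 : ℝ) = (Real.sqrt 2)⁻¹ := by
        rw [← Real.sqrt_eq_rpow]
        rw [show (1:ℝ)/2 = (2:ℝ)⁻¹ by norm_num, Real.sqrt_inv]
      rw [h1, h2]
      rw [div_eq_mul_inv, inv_inv, mul_comm]
    rw [htarget]
    have hznorm_eq : ‖z‖ = σ⁻¹ * ‖u‖ := by
      rw [hz, norm_smul, Real.norm_eq_abs, abs_of_pos (inv_pos.2 hσpos)]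
    have hσle : σ ≤ ((9:ℝ)/4) ^ (1/p : ℝ) :=
      Real.rpow_le_rpow hTpos.le hsumu (by positivity)
    have h94pos : (0:ℝ) < ((9:ℝ)/4) ^ (1/p : ℝ) := Real.rpow_pos_of_pos (by norm_num) _
    have hinv : (((9:ℝ)/4) ^ (1/p : ℝ))⁻¹ ≤ σ⁻¹ := inv_anti₀ hσpos hσle
    have hlow : (Real.sqrt 2 - 1/4) * (((9:ℝ)/4) ^ (1/p : ℝ))⁻¹ ≤ ‖z‖ := by
      rw [hznorm_eq, mul_comm σ⁻¹ ‖u‖]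
      exact mul_le_mul hnormu hinv (by positivity) (norm_nonneg u)
    refine le_trans ?_ hlow
    have e1 : ((1:ℝ)/4) ^ (1/p:ℝ) * ((9:ℝ)/4) ^ (1/p:ℝ) = ((9:ℝ)/16) ^ (1/p:ℝ) := by
      rw [← Real.mul_rpow (by norm_num) (by norm_num)]
      norm_num
    have e2 : ((9:ℝ)/16) ^ (1/p:ℝ) ≤ 9/16 := by
      have h5 := Real.rpow_le_rpow_of_exponent_ge (x := (9:ℝ)/16) (by norm_num) (by norm_num)
        (show (1:ℝ) ≤ 1/p by rw [le_div_iff₀ hp0]; linarith)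
      rwa [Real.rpow_one] at h5
    have step : Real.sqrt 2 * ((1:ℝ)/4)^(1/p:ℝ) * ((9:ℝ)/4)^(1/p:ℝ) ≤ Real.sqrt 2 - 1/4 := by
      calc Real.sqrt 2 * ((1:ℝ)/4)^(1/p:ℝ) * ((9:ℝ)/4)^(1/p:ℝ)
          = Real.sqrt 2 * ((9:ℝ)/16)^(1/p:ℝ) := by rw [mul_assoc, e1]
        _ ≤ Real.sqrt 2 * (9/16) := mul_le_mul_of_nonneg_left e2 (Real.sqrt_nonneg 2)
        _ ≤ Real.sqrt 2 - 1/4 := by nlinarith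
    calc Real.sqrt 2 * ((1:ℝ)/4)^(1/p:ℝ)
        = Real.sqrt 2 * ((1:ℝ)/4)^(1/p:ℝ) * (((9:ℝ)/4)^(1/p:ℝ) * (((9:ℝ)/4)^(1/p:ℝ))⁻¹) := by
          rw [mul_inv_cancel₀ h94pos.ne', mul_one]
      _ = (Real.sqrt 2 * ((1:ℝ)/4)^(1/p:ℝ) * ((9:ℝ)/4)^(1/p:ℝ)) * (((9:ℝ)/4)^(1/p:ℝ))⁻¹ := by
          ring
      _ ≤ (Real.sqrt 2 - 1/4) * (((9:ℝ)/4)^(1/p:ℝ))⁻¹ :=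
          mul_le_mul_of_nonneg_right step (by positivity)
  -- conclusion: use z or -z
  have hzero : Γ z = fun _ => 0 := hΓ0 z hzV
  have hzero' : Γ (-z) = fun _ => 0 := hΓ0 (-z) (V.neg_mem hzV)
  by_cases hcase : (1 / 2 : ℝ) ^ (2 / p - 1 / 2 : ℝ) ≤ ‖z - Δ (Γ z)‖
  · exact ⟨z, hzlp, hcase⟩
  · push_neg at hcase
    refine ⟨-z, ?_, ?_⟩
    · have hneg : ∀ l : Fin N, |(-z) l| ^ p = |z l| ^ p := fun l => by
        have h6 : (-z) l = -(z l) := rfl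
        rw [h6, abs_neg]
      rw [Finset.sum_congr rfl fun l _ => hneg l]
      exact hzlp
    · rw [hzero']
      rw [hzero] at hcase
      have hsum2 : 2 * ‖z‖ ≤ ‖z - Δ (fun _ => 0)‖ + ‖-z - Δ (fun _ => 0)‖ := by
        have h1 : ‖(z - Δ (fun _ => 0)) - (-z - Δ (fun _ => 0))‖
            ≤ ‖z - Δ (fun _ => 0)‖ + ‖-z - Δ (fun _ => 0)‖ := norm_sub_le _ _
        have h2 : (z - Δ (fun _ => 0)) - (-z - Δ (fun _ => 0)) = z + z := by abel
        rw [h2] at h1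
        have h3 : ‖z + z‖ = 2 * ‖z‖ := by
          rw [← two_smul ℝ z, norm_smul]
          simp
        linarith
      linarith

end
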